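/- For n ≥ 3, Disc_T(A_1 T + A_{n-1} T^{n-1} + A_n T^n) = ± A_1^2 · Disc_T(A_1 + A_{n-1} T^{n-2} + A_n T^{n-1}). -/

import Mathlib

open Polynomial

/-- The Sylvester matrix of two polynomials `f`, `g` (with respect to their
natural degrees): the first `g.natDegree` rows carry the coefficients of `f`,
the remaining `f.natDegree` rows carry the coefficients of `g`. -/
noncomputable def sylvester {R : Type*} [CommRing R] (f g : R[X]) :
    Matrix (Fin (f.natDegree + g.natDegree)) (Fin (f.natDegree + g.natDegree)) R :=
  Matrix.of fun i j =>
    if (i : ℕ) < g.natDegree then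
      (if (i : ℕ) ≤ (j : ℕ) ∧ (j : ℕ) ≤ (i : ℕ) + f.natDegree then
        f.coeff (f.natDegree + (i : ℕ) - (j : ℕ)) else 0)
    else
      (if (i : ℕ) - g.natDegree ≤ (j : ℕ) ∧ (j : ℕ) ≤ ((i : ℕ) - g.natDegree) + g.natDegree then
        g.coeff (g.natDegree + ((i : ℕ) - g.natDegree) - (j : ℕ)) else 0)

/-- The resultant `Res_T(f, g)`, the determinant of the Sylvester matrix. -/
noncomputable def resultant {R : Type*} [CommRing R] (f g : R[X]) : R :=
  (_root_.sylvester f g).det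

/-- `IsDiscOf f D` says `D` is the discriminant of `f`, characterized (without
division) by `lc(f) · D = (-1)^(n(n-1)/2) · Res_T(f, f')` where `n = deg f`.
Over an integral domain with `lc(f) ≠ 0` this determines `D` uniquely. -/
def IsDiscOf {R : Type*} [CommRing R] (f : R[X]) (D : R) : Prop :=
  f.leadingCoeff * D =
    (-1) ^ (f.natDegree * (f.natDegree - 1) / 2) * _root_.resultant f (derivative f)

/-- The discriminant of a polynomial over a field:
`Disc_T(f) = (-1)^(n(n-1)/2) · Res_T(f, f') / lc(f)`. -/
noncomputable def disc {F : Type*} [Field F] (f : F[X]) : F :=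
  ((-1) ^ (f.natDegree * (f.natDegree - 1) / 2) * _root_.resultant f (derivative f)) / f.leadingCoeff

namespace DiscAux

open Matrix

variable {R : Type*} [CommRing R]

/-- Explicit form of the Sylvester matrix of `aT + bT^(m+2) + cT^(m+3)` and its
derivative, with `u = c`, `v = b`, `w = a`, `x = (m+3)c`, `y = (m+2)b`. -/
noncomputable def bigM (m : ℕ) (u v w x y : R) : Matrix (Fin (2*m+5)) (Fin (2*m+5)) R :=
  Matrix.of fun i j =>
    if (i : ℕ) < m+2 then
      (if (j:ℕ) = (i:ℕ) then u else if (j:ℕ) = (i:ℕ)+1 then v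
       else if (j:ℕ) = (i:ℕ)+(m+2) then w else 0)
    else
      (if (j:ℕ) = (i:ℕ)-(m+2) then x else if (j:ℕ) = (i:ℕ)-(m+2)+1 then y
       else if (j:ℕ) = (i:ℕ)-(m+2)+(m+2) then w else 0)

/-- `bigM` with the last row and column removed. -/
noncomputable def midM (m : ℕ) (u v w x y : R) : Matrix (Fin (2*m+4)) (Fin (2*m+4)) R :=
  Matrix.of fun i j =>
    if (i : ℕ) < m+2 then
      (if (j:ℕ) = (i:ℕ) then u else if (j:ℕ) = (i:ℕ)+1 then v
       else if (j:ℕ) = (i:ℕ)+(m+2) then w else 0)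
    else
      (if (j:ℕ) = (i:ℕ)-(m+2) then x else if (j:ℕ) = (i:ℕ)-(m+2)+1 then y
       else if (j:ℕ) = (i:ℕ)-(m+2)+(m+2) then w else 0)

/-- `midM` after subtracting from each bottom row the corresponding top row. -/
noncomputable def midM2 (m : ℕ) (u v w x y : R) : Matrix (Fin (2*m+4)) (Fin (2*m+4)) R :=
  Matrix.of fun i j =>
    if (i:ℕ) < m+2 then midM m u v w x y i j
    else midM m u v w x y i j -
      midM m u v w x y ⟨(i:ℕ)-(m+2), lt_of_le_of_lt (Nat.sub_le _ _) i.isLt⟩ j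

/-- Explicit form of the Sylvester matrix of `a + bT^(m+1) + cT^(m+2)` and its
derivative, with `u = c`, `v = b`, `w = a`, `x = (m+2)c`, `y = (m+1)b`. -/
noncomputable def smallM (m : ℕ) (u v w x y : R) : Matrix (Fin (2*m+3)) (Fin (2*m+3)) R :=
  Matrix.of fun i j =>
    if (i : ℕ) < m+1 then
      (if (j:ℕ) = (i:ℕ) then u else if (j:ℕ) = (i:ℕ)+1 then v
       else if (j:ℕ) = (i:ℕ)+(m+2) then w else 0)
    else
      (if (j:ℕ) = (i:ℕ)-(m+1) then x else if (j:ℕ) = (i:ℕ)-(m+1)+1 then y else 0)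

lemma det_bigM (m : ℕ) (u v w x y : R) :
    (bigM m u v w x y).det = (midM m u v w x y).det * w := by
  have hsz : 2*m+4+1 = 2*m+5 := by omega
  let e : Fin (2*m+4) ⊕ Fin 1 ≃ Fin (2*m+5) := finSumFinEquiv.trans (finCongr hsz)
  have h1 : (bigM m u v w x y).submatrix e e =
      Matrix.fromBlocks (midM m u v w x y) 0
        (Matrix.of fun (i : Fin 1) (j : Fin (2*m+4)) =>
          bigM m u v w x y (e (Sum.inr i)) (e (Sum.inl j)))
        (Matrix.of fun (_ : Fin 1) (_ : Fin 1) => w) := by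
    ext i j
    rcases i with i | i <;> rcases j with j | j <;>
      (first
        | rfl
        | (have hi2 := i.isLt
           have hj2 := j.isLt
           simp only [Matrix.submatrix_apply, e, Equiv.trans_apply, finSumFinEquiv_apply_left,
             finSumFinEquiv_apply_right, finCongr_apply, bigM, midM, Matrix.of_apply,
             Matrix.fromBlocks_apply₁₁, Matrix.fromBlocks_apply₁₂, Matrix.fromBlocks_apply₂₁,
             Matrix.fromBlocks_apply₂₂, Fin.coe_cast, Fin.coe_castAdd, Fin.coe_natAdd,
             Matrix.zero_apply]
           split_ifs <;> first | rfl | (exfalso; omega)))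
  have h2 := Matrix.det_submatrix_equiv_self e (bigM m u v w x y)
  rw [← h2, h1, Matrix.det_fromBlocks_zero₁₂]
  congr 1
  rw [Matrix.det_fin_one]
  rfl

/-- The lower-triangular matrix implementing the row operations. -/
noncomputable def lowM (m : ℕ) : Matrix (Fin (2*m+4)) (Fin (2*m+4)) R :=
  Matrix.of fun i j =>
    if (i:ℕ) = (j:ℕ) then 1 else if (i:ℕ) = (j:ℕ)+(m+2) then -1 else 0

lemma det_lowM (m : ℕ) : (lowM m : Matrix _ _ R).det = 1 := by
  have ht : (lowM m : Matrix _ _ R).BlockTriangular OrderDual.toDual := by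
    intro i j h
    have : (i : ℕ) < (j : ℕ) := h
    simp only [lowM, Matrix.of_apply]
    split_ifs <;> first | rfl | (exfalso; omega)
  rw [Matrix.det_of_lowerTriangular _ ht]
  have : ∀ i : Fin (2*m+4), (lowM m : Matrix _ _ R) i i = 1 := by
    intro i; simp [lowM]
  simp [this]

lemma lowM_mul (m : ℕ) (u v w x y : R) :
    (lowM m) * (midM m u v w x y) = midM2 m u v w x y := by
  ext i j
  rw [Matrix.mul_apply]
  have key : ∀ k : Fin (2*m+4), lowM m i k * midM m u v w x y k j =
      (if (i:ℕ) = (k:ℕ) then midM m u v w x y k j else 0)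
      + (if (i:ℕ) = (k:ℕ)+(m+2) then -(midM m u v w x y k j) else 0) := by
    intro k
    simp only [lowM, Matrix.of_apply]
    split_ifs <;> first | (exfalso; omega) | ring
  simp_rw [key]
  rw [Finset.sum_add_distrib]
  have h1 : ∀ k : Fin (2*m+4), ((i:ℕ) = (k:ℕ)) ↔ k = i := by
    intro k; rw [Fin.ext_iff]; omega
  simp_rw [h1]
  rw [Finset.sum_ite_eq' Finset.univ i]
  simp only [Finset.mem_univ, if_true]
  by_cases h : m+2 ≤ (i:ℕ)
  · have hlt : (i:ℕ)-(m+2) < 2*m+4 := lt_of_le_of_lt (Nat.sub_le _ _) i.isLt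
    have h2 : ∀ k : Fin (2*m+4), ((i:ℕ) = (k:ℕ)+(m+2)) ↔ k = (⟨(i:ℕ)-(m+2), hlt⟩ : Fin (2*m+4)) := by
      intro k; rw [Fin.ext_iff]; simp only [Fin.val_mk]; omega
    simp_rw [h2]
    rw [Finset.sum_ite_eq' Finset.univ]
    simp only [Finset.mem_univ, if_true, midM2, Matrix.of_apply]
    rw [if_neg (by omega)]
    ring
  · have h2 : ∀ k : Fin (2*m+4), ¬((i:ℕ) = (k:ℕ)+(m+2)) := by intro k; omega
    simp only [h2, if_false, Finset.sum_const_zero, add_zero, midM2, Matrix.of_apply]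
    rw [if_pos (by omega)]

lemma det_midM2 (m : ℕ) (u v w x y : R) :
    (midM2 m u v w x y).det = (midM m u v w x y).det := by
  rw [← lowM_mul, Matrix.det_mul, det_lowM, one_mul]

/-- Row equivalence extracting row `m+1`. -/
def rowE (m : ℕ) : Fin 1 ⊕ Fin (2*m+3) ≃ Fin (2*m+4) where
  toFun := Sum.elim (fun _ => ⟨m+1, by omega⟩)
    (fun j => ⟨if (j:ℕ) < m+1 then (j:ℕ) else (j:ℕ)+1, by have := j.isLt; split_ifs <;> omega⟩)
  invFun i :=
    if (i:ℕ) = m+1 then Sum.inl 0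
    else Sum.inr ⟨if (i:ℕ) < m+1 then (i:ℕ) else (i:ℕ)-1,
      by have := i.isLt; split_ifs <;> omega⟩
  left_inv := by
    rintro (i | j)
    · simp only [Sum.elim_inl, Fin.val_mk, if_true]
      exact congrArg Sum.inl (Subsingleton.elim _ _)
    · have hj := j.isLt
      simp only [Sum.elim_inr, Fin.val_mk]
      simp only [show (if (j:ℕ) < m+1 then (j:ℕ) else (j:ℕ)+1) ≠ m+1 by split_ifs <;> omega, if_false]
      refine congrArg Sum.inr (Fin.ext ?_)
      simp only [Fin.val_mk]
      split_ifs <;> omega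
  right_inv := by
    intro i
    have hi := i.isLt
    dsimp only
    split_ifs with h1
    · simp only [Sum.elim_inl]
      exact Fin.ext (by simp only [Fin.val_mk]; omega)
    all_goals
      simp only [Sum.elim_inr]
      refine Fin.ext ?_
      simp only [Fin.val_mk]
      split_ifs <;> omega

/-- Column equivalence extracting the last column. -/
def colE (m : ℕ) : Fin 1 ⊕ Fin (2*m+3) ≃ Fin (2*m+4) :=
  (Equiv.sumComm (Fin 1) (Fin (2*m+3))).trans (finSumFinEquiv.trans (finCongr (by omega)))

lemma colE_inl (m : ℕ) (i : Fin 1) : ((colE m (Sum.inl i) : Fin (2*m+4)) : ℕ) = 2*m+3 := by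
  simp [colE, finSumFinEquiv]
  try omega

lemma colE_inr (m : ℕ) (j : Fin (2*m+3)) : ((colE m (Sum.inr j) : Fin (2*m+4)) : ℕ) = (j:ℕ) := by
  simp [colE, finSumFinEquiv]

lemma rowE_inl (m : ℕ) (i : Fin 1) : ((rowE m (Sum.inl i) : Fin (2*m+4)) : ℕ) = m+1 := by
  simp only [rowE, Equiv.coe_fn_mk, Sum.elim_inl]

lemma rowE_inr (m : ℕ) (j : Fin (2*m+3)) :
    ((rowE m (Sum.inr j) : Fin (2*m+4)) : ℕ) = if (j:ℕ) < m+1 then (j:ℕ) else (j:ℕ)+1 := by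
  simp only [rowE, Equiv.coe_fn_mk, Sum.elim_inr]

lemma midM2_apply (m : ℕ) (u v w x y : R) (i j : Fin (2*m+4)) :
    midM2 m u v w x y i j =
    if (i:ℕ) < m+2 then
      (if (j:ℕ) = (i:ℕ) then u else if (j:ℕ) = (i:ℕ)+1 then v
       else if (j:ℕ) = (i:ℕ)+(m+2) then w else 0)
    else
      ((if (j:ℕ) = (i:ℕ)-(m+2) then x else if (j:ℕ) = (i:ℕ)-(m+2)+1 then y
        else if (j:ℕ) = (i:ℕ)-(m+2)+(m+2) then w else 0)
       - (if (j:ℕ) = (i:ℕ)-(m+2) then u else if (j:ℕ) = (i:ℕ)-(m+2)+1 then v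
        else if (j:ℕ) = (i:ℕ)-(m+2)+(m+2) then w else 0)) := by
  have hi := i.isLt
  by_cases h : (i:ℕ) < m+2
  · simp only [midM2, midM, Matrix.of_apply, if_pos h]
  · simp only [midM2, midM, Matrix.of_apply, if_neg h, Fin.val_mk]
    rw [if_pos (show (i:ℕ)-(m+2) < m+2 by omega)]

lemma det_midM2_small (m : ℕ) (u v w x y : R) :
    ∃ s : R, (s = 1 ∨ s = -1) ∧
      (midM2 m u v w x y).det = s * (w * (smallM m u v w (x-u) (y-v)).det) := by
  classical
  set M2 := midM2 m u v w x y with hM2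
  have hblock : M2.submatrix (rowE m) (colE m) =
      Matrix.fromBlocks (Matrix.of fun (_ : Fin 1) (_ : Fin 1) => w)
        (Matrix.of fun (i : Fin 1) (j : Fin (2*m+3)) =>
          M2 (rowE m (Sum.inl i)) (colE m (Sum.inr j)))
        0 (smallM m u v w (x-u) (y-v)) := by
    ext i j
    rcases i with i | i <;> rcases j with j | j
    · simp only [Matrix.submatrix_apply, Matrix.fromBlocks_apply₁₁, Matrix.of_apply]
      have hr : ((rowE m (Sum.inl i)) : ℕ) = m+1 := rowE_inl m i
      have hc : ((colE m (Sum.inl j)) : ℕ) = 2*m+3 := colE_inl m j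
      rw [hM2, midM2_apply, hr, hc]
      split_ifs <;> first | rfl | (exfalso; omega)
    · rfl
    · simp only [Matrix.submatrix_apply, Matrix.fromBlocks_apply₂₁, Matrix.zero_apply]
      have hik := i.isLt
      have hr : ((rowE m (Sum.inr i)) : ℕ) = if (i:ℕ) < m+1 then (i:ℕ) else (i:ℕ)+1 :=
        rowE_inr m i
      have hc : ((colE m (Sum.inl j)) : ℕ) = 2*m+3 := colE_inl m j
      rw [hM2, midM2_apply, hr, hc]
      split_ifs <;> first | (exfalso; omega) | ring
    · simp only [Matrix.submatrix_apply, Matrix.fromBlocks_apply₂₂, Matrix.of_apply]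
      have hik := i.isLt
      have hjk := j.isLt
      have hr : ((rowE m (Sum.inr i)) : ℕ) = if (i:ℕ) < m+1 then (i:ℕ) else (i:ℕ)+1 :=
        rowE_inr m i
      have hc : ((colE m (Sum.inr j)) : ℕ) = (j:ℕ) := colE_inr m j
      rw [hM2, midM2_apply, hr, hc]
      simp only [smallM, Matrix.of_apply]
      split_ifs <;> first | (exfalso; omega) | ring
  set σ : Equiv.Perm (Fin 1 ⊕ Fin (2*m+3)) := (rowE m).trans (colE m).symm with hσ
  have hsub : M2.submatrix (rowE m) (colE m) =
      (M2.submatrix (colE m) (colE m)).submatrix σ id := by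
    ext i j
    simp [hσ, Matrix.submatrix_apply]
  have hdet1 : (M2.submatrix (rowE m) (colE m)).det =
      (Equiv.Perm.sign σ : ℤ) * M2.det := by
    rw [hsub, Matrix.det_permute, Matrix.det_submatrix_equiv_self]
  have hdet2 : (M2.submatrix (rowE m) (colE m)).det =
      w * (smallM m u v w (x-u) (y-v)).det := by
    rw [hblock, Matrix.det_fromBlocks_zero₂₁]
    congr 1
    rw [Matrix.det_fin_one]
    rfl
  rcases Int.units_eq_one_or (Equiv.Perm.sign σ) with hs | hs
  · refine ⟨1, Or.inl rfl, ?_⟩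
    rw [hs] at hdet1
    simp only [Units.val_one, Int.cast_one, one_mul] at hdet1 ⊢
    rw [← hdet1, hdet2]
  · refine ⟨-1, Or.inr rfl, ?_⟩
    rw [hs] at hdet1
    simp only [Units.val_neg, Units.val_one, Int.cast_neg, Int.cast_one, neg_mul, one_mul]
      at hdet1 ⊢
    rw [← hdet2, hdet1]
    ring

section Poly
variable (m : ℕ) (a b c : R)

/-- `P = aT + bT^(m+2) + cT^(m+3)`. -/
noncomputable def P : R[X] := C a * X + C b * X^(m+2) + C c * X^(m+3)
/-- `Q = a + bT^(m+1) + cT^(m+2)`, so that `P = T·Q`. -/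
noncomputable def Q : R[X] := C a + C b * X^(m+1) + C c * X^(m+2)

lemma coeff_P (k : ℕ) : (P m a b c).coeff k =
    (if k = 1 then a else 0) + (if k = m+2 then b else 0) + (if k = m+3 then c else 0) := by
  simp only [P, coeff_add, coeff_C_mul, coeff_X, coeff_X_pow]
  split_ifs <;> first | (exfalso; omega) | ring

lemma coeff_Q (k : ℕ) : (Q m a b c).coeff k =
    (if k = 0 then a else 0) + (if k = m+1 then b else 0) + (if k = m+2 then c else 0) := by
  simp only [Q, coeff_add, coeff_C_mul, coeff_C, coeff_X_pow]
  split_ifs <;> first | (exfalso; omega) | ring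

lemma coeff_dP (k : ℕ) : (derivative (P m a b c)).coeff k =
    (if k = 0 then a else 0) + (if k = m+1 then ((m+2 : ℕ) : R) * b else 0)
      + (if k = m+2 then ((m+3 : ℕ) : R) * c else 0) := by
  rw [coeff_derivative, coeff_P]
  split_ifs <;> first | (exact absurd trivial (by assumption)) | (exact False.elim (by assumption)) | (exfalso; omega) | (subst_vars; push_cast; ring)

lemma coeff_dQ (k : ℕ) : (derivative (Q m a b c)).coeff k =
    (if k = m then ((m+1 : ℕ) : R) * b else 0) + (if k = m+1 then ((m+2 : ℕ) : R) * c else 0) := by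
  rw [coeff_derivative, coeff_Q]
  split_ifs <;> first | (exact absurd trivial (by assumption)) | (exact False.elim (by assumption)) | (exfalso; omega) | (subst_vars; push_cast; ring)

lemma natDegree_P (hc : c ≠ 0) : (P m a b c).natDegree = m+3 := by
  apply le_antisymm
  · rw [natDegree_le_iff_coeff_eq_zero]
    intro k hk
    rw [coeff_P]
    have h1 : ¬ (k = 1) := by omega
    have h2 : ¬ (k = m+2) := by omega
    have h3 : ¬ (k = m+3) := by omega
    simp [h1, h2, h3]
  · apply le_natDegree_of_ne_zero
    rw [coeff_P]
    have h1 : ¬ (m+3 = 1) := by omega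
    have h2 : ¬ (m+3 = m+2) := by omega
    simpa [h1, h2] using hc

lemma natDegree_Q (hc : c ≠ 0) : (Q m a b c).natDegree = m+2 := by
  apply le_antisymm
  · rw [natDegree_le_iff_coeff_eq_zero]
    intro k hk
    rw [coeff_Q]
    have h1 : ¬ (k = 0) := by omega
    have h2 : ¬ (k = m+1) := by omega
    have h3 : ¬ (k = m+2) := by omega
    simp [h1, h2, h3]
  · apply le_natDegree_of_ne_zero
    rw [coeff_Q]
    have h1 : ¬ (m+2 = 0) := by omega
    have h2 : ¬ (m+2 = m+1) := by omega
    simpa [h1, h2] using hc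

lemma natDegree_dP (hc3 : ((m+3 : ℕ) : R) * c ≠ 0) : (derivative (P m a b c)).natDegree = m+2 := by
  apply le_antisymm
  · rw [natDegree_le_iff_coeff_eq_zero]
    intro k hk
    rw [coeff_dP]
    have h1 : ¬ (k = 0) := by omega
    have h2 : ¬ (k = m+1) := by omega
    have h3 : ¬ (k = m+2) := by omega
    simp [h1, h2, h3]
  · apply le_natDegree_of_ne_zero
    rw [coeff_dP]
    have h1 : ¬ (m+2 = 0) := by omega
    have h2 : ¬ (m+2 = m+1) := by omega
    simpa [h1, h2] using hc3

lemma natDegree_dQ (hc2 : ((m+2 : ℕ) : R) * c ≠ 0) : (derivative (Q m a b c)).natDegree = m+1 := by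
  apply le_antisymm
  · rw [natDegree_le_iff_coeff_eq_zero]
    intro k hk
    rw [coeff_dQ]
    have h1 : ¬ (k = m) := by omega
    have h2 : ¬ (k = m+1) := by omega
    simp [h1, h2]
  · apply le_natDegree_of_ne_zero
    rw [coeff_dQ]
    have h1 : ¬ (m+1 = m) := by omega
    simpa [h1] using hc2

lemma leadingCoeff_P (hc : c ≠ 0) : (P m a b c).leadingCoeff = c := by
  rw [leadingCoeff, natDegree_P m a b c hc, coeff_P]
  have h1 : ¬ (m+3 = 1) := by omega
  have h2 : ¬ (m+3 = m+2) := by omega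
  simp [h1, h2]

lemma leadingCoeff_Q (hc : c ≠ 0) : (Q m a b c).leadingCoeff = c := by
  rw [leadingCoeff, natDegree_Q m a b c hc, coeff_Q]
  have h1 : ¬ (m+2 = 0) := by omega
  have h2 : ¬ (m+2 = m+1) := by omega
  simp [h1, h2]

lemma resultant_P (hc : c ≠ 0) (hc3 : ((m+3 : ℕ) : R) * c ≠ 0) :
    _root_.resultant (P m a b c) (derivative (P m a b c)) =
      (bigM m c b a (((m+3 : ℕ) : R) * c) (((m+2 : ℕ) : R) * b)).det := by
  have hdeg : 2*m+5 = (P m a b c).natDegree + (derivative (P m a b c)).natDegree := by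
    rw [natDegree_P m a b c hc, natDegree_dP m a b c hc3]; omega
  rw [_root_.resultant, ← Matrix.det_submatrix_equiv_self (finCongr hdeg)]
  congr 1
  ext i j
  have hi := i.isLt
  have hj := j.isLt
  simp only [Matrix.submatrix_apply, _root_.sylvester, Matrix.of_apply, finCongr_apply, Fin.coe_cast,
    bigM, natDegree_P m a b c hc, natDegree_dP m a b c hc3, coeff_P, coeff_dP]
  split_ifs <;> first | (exfalso; omega) | ring

lemma resultant_Q (hc : c ≠ 0) (hc2 : ((m+2 : ℕ) : R) * c ≠ 0) :
    _root_.resultant (Q m a b c) (derivative (Q m a b c)) =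
      (smallM m c b a (((m+2 : ℕ) : R) * c) (((m+1 : ℕ) : R) * b)).det := by
  have hdeg : 2*m+3 = (Q m a b c).natDegree + (derivative (Q m a b c)).natDegree := by
    rw [natDegree_Q m a b c hc, natDegree_dQ m a b c hc2]; omega
  rw [_root_.resultant, ← Matrix.det_submatrix_equiv_self (finCongr hdeg)]
  congr 1
  ext i j
  have hi := i.isLt
  have hj := j.isLt
  simp only [Matrix.submatrix_apply, _root_.sylvester, Matrix.of_apply, finCongr_apply, Fin.coe_cast,
    smallM, natDegree_Q m a b c hc, natDegree_dQ m a b c hc2, coeff_Q, coeff_dQ]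
  split_ifs <;> first | (exfalso; omega) | ring

lemma resultant_rel (hc : c ≠ 0) (hc3 : ((m+3 : ℕ) : R) * c ≠ 0)
    (hc2 : ((m+2 : ℕ) : R) * c ≠ 0) :
    ∃ t : R, (t = 1 ∨ t = -1) ∧
      _root_.resultant (P m a b c) (derivative (P m a b c)) =
        t * (a * a * _root_.resultant (Q m a b c) (derivative (Q m a b c))) := by
  obtain ⟨s, hs, hdet⟩ := det_midM2_small m c b a (((m+3 : ℕ) : R) * c) (((m+2 : ℕ) : R) * b)
  refine ⟨s, hs, ?_⟩
  have e1 : ((m+3 : ℕ) : R) * c - c = ((m+2 : ℕ) : R) * c := by push_cast; ring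
  have e2 : ((m+2 : ℕ) : R) * b - b = ((m+1 : ℕ) : R) * b := by push_cast; ring
  rw [e1, e2] at hdet
  rw [resultant_P m a b c hc hc3, resultant_Q m a b c hc hc2, det_bigM, ← det_midM2, hdet]
  ring

end Poly
end DiscAux

open MvPolynomial in
/-- For `n ≥ 3`,
`Disc_T(A_1 T + A_{n-1} T^(n-1) + A_n T^n)
  = ± A_1^2 · Disc_T(A_1 + A_{n-1} T^(n-2) + A_n T^(n-1))`,
where the sign depends only on `n`. -/
theorem disc_sparse_trinomial {n : ℕ} (hn : 3 ≤ n)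
    (Dp Dq : MvPolynomial (Fin (n + 1)) ℤ)
    (hDp : IsDiscOf (Polynomial.C (X 1) * Polynomial.X +
        Polynomial.C (X ⟨n - 1, by omega⟩) * Polynomial.X ^ (n - 1) +
        Polynomial.C (X ⟨n, by omega⟩) * Polynomial.X ^ n) Dp)
    (hDq : IsDiscOf (Polynomial.C (X 1) +
        Polynomial.C (X ⟨n - 1, by omega⟩) * Polynomial.X ^ (n - 2) +
        Polynomial.C (X ⟨n, by omega⟩) * Polynomial.X ^ (n - 1)) Dq) :
    Dp = (X 1) ^ 2 * Dq ∨ Dp = -((X 1) ^ 2 * Dq) := by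
  obtain ⟨m, rfl⟩ : ∃ m, n = m + 3 := ⟨n - 3, by omega⟩
  set a : MvPolynomial (Fin (m + 3 + 1)) ℤ := X 1 with ha
  set b : MvPolynomial (Fin (m + 3 + 1)) ℤ := X ⟨m + 2, by omega⟩ with hb
  set c : MvPolynomial (Fin (m + 3 + 1)) ℤ := X ⟨m + 3, by omega⟩ with hcc
  have hc : c ≠ 0 := MvPolynomial.X_ne_zero _
  have hc3 : ((m+3 : ℕ) : MvPolynomial (Fin (m + 3 + 1)) ℤ) * c ≠ 0 :=
    mul_ne_zero (Nat.cast_ne_zero.mpr (by omega)) hc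
  have hc2 : ((m+2 : ℕ) : MvPolynomial (Fin (m + 3 + 1)) ℤ) * c ≠ 0 :=
    mul_ne_zero (Nat.cast_ne_zero.mpr (by omega)) hc
  have hDp' : IsDiscOf (DiscAux.P m a b c) Dp := hDp
  have hDq' : IsDiscOf (DiscAux.Q m a b c) Dq := hDq
  unfold IsDiscOf at hDp' hDq'
  rw [DiscAux.leadingCoeff_P m a b c hc] at hDp'
  rw [DiscAux.leadingCoeff_Q m a b c hc] at hDq'
  obtain ⟨t, ht, hrel⟩ := DiscAux.resultant_rel m a b c hc hc3 hc2
  set E1 := (DiscAux.P m a b c).natDegree * ((DiscAux.P m a b c).natDegree - 1) / 2 with hE1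
  set E2 := (DiscAux.Q m a b c).natDegree * ((DiscAux.Q m a b c).natDegree - 1) / 2 with hE2
  have hsq : ((-1 : MvPolynomial (Fin (m + 3 + 1)) ℤ) ^ E2) * ((-1) ^ E2) = 1 := by
    rw [← mul_pow]; norm_num
  have hRQ : _root_.resultant (DiscAux.Q m a b c) (Polynomial.derivative (DiscAux.Q m a b c)) =
      (-1) ^ E2 * (c * Dq) := by
    rw [hDq', ← mul_assoc, hsq, one_mul]
  have hmain : c * Dp = c * (((-1) ^ E1 * t * (-1) ^ E2) * (a ^ 2 * Dq)) := by
    rw [hDp', hrel, hRQ]; ring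
  have hDpq : Dp = ((-1) ^ E1 * t * (-1) ^ E2) * (a ^ 2 * Dq) := mul_left_cancel₀ hc hmain
  have h1 : (-1 : MvPolynomial (Fin (m + 3 + 1)) ℤ) ^ E1 = 1 ∨
      (-1 : MvPolynomial (Fin (m + 3 + 1)) ℤ) ^ E1 = -1 := by
    rcases Nat.even_or_odd E1 with h | h
    · exact Or.inl h.neg_one_pow
    · exact Or.inr h.neg_one_pow
  have h2 : (-1 : MvPolynomial (Fin (m + 3 + 1)) ℤ) ^ E2 = 1 ∨
      (-1 : MvPolynomial (Fin (m + 3 + 1)) ℤ) ^ E2 = -1 := by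
    rcases Nat.even_or_odd E2 with h | h
    · exact Or.inl h.neg_one_pow
    · exact Or.inr h.neg_one_pow
  have hu : ((-1 : MvPolynomial (Fin (m + 3 + 1)) ℤ) ^ E1 * t * (-1) ^ E2 = 1) ∨
      ((-1 : MvPolynomial (Fin (m + 3 + 1)) ℤ) ^ E1 * t * (-1) ^ E2 = -1) := by
    rcases h1 with h1 | h1 <;> rcases ht with rfl | rfl <;> rcases h2 with h2 | h2 <;>
      rw [h1, h2] <;> norm_num
  rcases hu with hu | hu
  · left
    rw [hDpq, hu, one_mul]
  · right
    rw [hDpq, hu]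
    ring
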